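/- For r ∈ (1, √3) define k(r) = √((1 + r²)(3 − r²))/(2r). Then for every r ∈ (1, √3), 2 < ((1 − r²)/r)·K(k(r)) + 2r·E(k(r)) < 2π/√3, where K and E are the complete elliptic integrals of the first and second kind. -/

import Mathlib

open Real

/-- The complete elliptic integral of the first kind. -/
noncomputable def ellipticK (k : ℝ) : ℝ :=
  ∫ x in (0 : ℝ)..(π / 2), (Real.sqrt (1 - k ^ 2 * Real.sin x ^ 2))⁻¹

/-- The complete elliptic integral of the second kind. -/
noncomputable def ellipticE (k : ℝ) : ℝ :=
  ∫ x in (0 : ℝ)..(π / 2), Real.sqrt (1 - k ^ 2 * Real.sin x ^ 2)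

/-- The modulus `k(r) = √((1+r²)(3−r²))/(2r)`. -/
noncomputable def kmod (r : ℝ) : ℝ := Real.sqrt ((1 + r ^ 2) * (3 - r ^ 2)) / (2 * r)

set_option maxHeartbeats 2000000 in
/-- the area function lies strictly between `2` and `2π/√3` on `(1,√3)`. -/
theorem stmt_5 :
    ∀ r ∈ Set.Ioo (1 : ℝ) (Real.sqrt 3),
      2 < ((1 - r ^ 2) / r) * ellipticK (kmod r) + 2 * r * ellipticE (kmod r) ∧
      ((1 - r ^ 2) / r) * ellipticK (kmod r) + 2 * r * ellipticE (kmod r) <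
        2 * π / Real.sqrt 3 := by
  rintro r ⟨hr1, hr3⟩
  have hr0 : (0 : ℝ) < r := lt_trans one_pos hr1
  have hs3 : (0 : ℝ) < Real.sqrt 3 := Real.sqrt_pos.mpr (by norm_num)
  have h3 : Real.sqrt 3 ^ 2 = 3 := Real.sq_sqrt (by norm_num)
  have hq3 : r ^ 2 < 3 := by nlinarith
  have hq1 : 1 < r ^ 2 := by nlinarith
  have hM : (0 : ℝ) ≤ (1 + r ^ 2) * (3 - r ^ 2) := by nlinarith
  have hk2 : (kmod r) ^ 2 = (1 + r ^ 2) * (3 - r ^ 2) / (4 * r ^ 2) := by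
    rw [kmod, div_pow, Real.sq_sqrt hM]
    congr 1; ring
  have hk2nn : 0 ≤ (kmod r) ^ 2 := sq_nonneg _
  -- pointwise positivity of 1 - k² sin² x
  have hpos : ∀ x : ℝ, 0 < 1 - (kmod r) ^ 2 * Real.sin x ^ 2 := by
    intro x
    have hs : Real.sin x ^ 2 ≤ 1 := Real.sin_sq_le_one x
    have : (kmod r) ^ 2 * Real.sin x ^ 2 ≤ (kmod r) ^ 2 * 1 :=
      mul_le_mul_of_nonneg_left hs hk2nn
    have hk2lt : (kmod r) ^ 2 < 1 := by
      rw [hk2, div_lt_one (by positivity)]; nlinarith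
    nlinarith
  set G : ℝ → ℝ := fun x => Real.sqrt (1 - (kmod r) ^ 2 * Real.sin x ^ 2) with hGdef
  have hGpos : ∀ x : ℝ, 0 < G x := fun x => Real.sqrt_pos.mpr (hpos x)
  have hGsq : ∀ x : ℝ, G x ^ 2 = 1 - (kmod r) ^ 2 * Real.sin x ^ 2 := fun x =>
    Real.sq_sqrt (hpos x).le
  have hG1 : ∀ x : ℝ, G x ≤ 1 := by
    intro x
    rw [show (1 : ℝ) = Real.sqrt 1 by simp [Real.sqrt_one]]
    apply Real.sqrt_le_sqrt
    nlinarith [mul_nonneg hk2nn (sq_nonneg (Real.sin x))]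
  -- continuity / integrability
  have hGcont : Continuous G := by
    apply Real.continuous_sqrt.comp
    continuity
  have hGicont : Continuous fun x => (G x)⁻¹ :=
    hGcont.inv₀ fun x => (hGpos x).ne'
  have hintE : IntervalIntegrable G MeasureTheory.volume 0 (π / 2) :=
    hGcont.intervalIntegrable _ _
  have hintK : IntervalIntegrable (fun x => (G x)⁻¹) MeasureTheory.volume 0 (π / 2) :=
    hGicont.intervalIntegrable _ _
  have hintF : IntervalIntegrable (fun x => (1 - r ^ 2) / r * (G x)⁻¹ + 2 * r * G x)
      MeasureTheory.volume 0 (π / 2) :=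
    ((hintK.const_mul _).add (hintE.const_mul _))
  have hA : ((1 - r ^ 2) / r) * ellipticK (kmod r) + 2 * r * ellipticE (kmod r)
      = ∫ x in (0 : ℝ)..(π / 2), ((1 - r ^ 2) / r * (G x)⁻¹ + 2 * r * G x) := by
    rw [ellipticK, ellipticE, ← intervalIntegral.integral_const_mul,
      ← intervalIntegral.integral_const_mul,
      ← intervalIntegral.integral_add (hintK.const_mul _) (hintE.const_mul _)]
  have hpih : (0 : ℝ) < π / 2 := by positivity
  constructor
  · -- lower bound: A > 2
    have hcosint : (∫ x in (0 : ℝ)..(π / 2), 2 * Real.cos x) = 2 := by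
      rw [intervalIntegral.integral_const_mul, integral_cos]
      simp
    have hdiff : (0:ℝ) < (∫ x in (0 : ℝ)..(π / 2),
        ((1 - r ^ 2) / r * (G x)⁻¹ + 2 * r * G x - 2 * Real.cos x)) := by
      apply intervalIntegral.intervalIntegral_pos_of_pos_on
      · exact hintF.sub ((intervalIntegral.intervalIntegrable_cos).const_mul 2)
      · intro x hx
        have hc : 0 ≤ Real.cos x :=
          Real.cos_nonneg_of_mem_Icc ⟨by linarith [hx.1, Real.pi_pos], hx.2.le⟩
        set t := Real.sin x ^ 2 with ht
        have ht0 : 0 ≤ t := sq_nonneg _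
        have ht1 : t ≤ 1 := Real.sin_sq_le_one x
        have hcs : Real.cos x ^ 2 = 1 - t := by
          have := Real.sin_sq_add_cos_sq x; linarith
        have hu : 0 < r ^ 2 - 1 := by linarith
        -- N = r * G x * F x
        set N : ℝ := 1 + r ^ 2 - (1 + r ^ 2) * (3 - r ^ 2) * t / 2 with hN
        have hNpos : 0 < N := by
          rw [hN]; nlinarith [mul_nonneg hM ht0, mul_nonneg hM (sub_nonneg.mpr ht1)]
        have hNval : 1 - r ^ 2 + 2 * r ^ 2 * G x ^ 2 = N := by
          rw [hGsq x, hk2, hN]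
          field_simp
          ring
        have hFN : (1 - r ^ 2) / r * (G x)⁻¹ + 2 * r * G x = N / (r * G x) := by
          rw [← hNval]
          have hGne : G x ≠ 0 := (hGpos x).ne'
          field_simp
        rw [hFN, sub_pos, lt_div_iff₀ (mul_pos hr0 (hGpos x))]
        -- squared inequality
        have hsq : (2 * Real.cos x * (r * G x)) ^ 2 < N ^ 2 := by
          have hGx2 : G x ^ 2 = 1 - (1 + r ^ 2) * (3 - r ^ 2) * t / (4 * r ^ 2) := by
            rw [hGsq x, hk2]; ring
          have key : (1 - t) * (4 * r ^ 2 - (1 + r ^ 2) * (3 - r ^ 2) * t) < N ^ 2 := by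
            rw [hN]
            nlinarith [mul_pos hu hu,
              mul_nonneg (mul_nonneg (mul_nonneg hu.le hu.le) ht0) (sub_nonneg.mpr ht1),
              mul_nonneg (mul_nonneg (mul_nonneg hu.le hu.le) hu.le) ht0,
              sq_nonneg ((r ^ 2 - 1) ^ 2 * t)]
          have hexp : (2 * Real.cos x * (r * G x)) ^ 2
              = (1 - t) * (4 * r ^ 2 - (1 + r ^ 2) * (3 - r ^ 2) * t) := by
            have : (2 * Real.cos x * (r * G x)) ^ 2
                = 4 * Real.cos x ^ 2 * r ^ 2 * G x ^ 2 := by ring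
            rw [this, hcs, hGx2]
            field_simp
          rw [hexp]; exact key
        nlinarith [mul_nonneg (mul_nonneg (by norm_num : (0:ℝ) ≤ 2) hc)
          (mul_pos hr0 (hGpos x)).le, hNpos]
      · exact hpih
    rw [intervalIntegral.integral_sub hintF
      ((intervalIntegral.intervalIntegrable_cos).const_mul 2)] at hdiff
    rw [hA]
    linarith [hcosint]
  · -- upper bound
    have hup : ∀ x ∈ Set.Icc (0 : ℝ) (π / 2),
        (1 - r ^ 2) / r * (G x)⁻¹ + 2 * r * G x ≤ (1 + r ^ 2) / r := by
      intro x _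
      have hGx := hGpos x
      have hG1x := hG1 x
      have hid : (1 - r ^ 2) / r * (G x)⁻¹ + 2 * r * G x - (1 + r ^ 2) / r
          = (G x - 1) * (2 * r ^ 2 * G x - (1 - r ^ 2)) / (r * G x) := by
        field_simp
        ring
      have hnum : (G x - 1) * (2 * r ^ 2 * G x - (1 - r ^ 2)) ≤ 0 := by
        apply mul_nonpos_of_nonpos_of_nonneg
        · linarith
        · nlinarith
      have : (G x - 1) * (2 * r ^ 2 * G x - (1 - r ^ 2)) / (r * G x) ≤ 0 :=
        div_nonpos_of_nonpos_of_nonneg hnum (by positivity)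
      linarith [hid ▸ this]
    have hconst : (∫ _x in (0 : ℝ)..(π / 2), (1 + r ^ 2) / r)
        = (π / 2) * ((1 + r ^ 2) / r) := by
      rw [intervalIntegral.integral_const]; simp [smul_eq_mul]
    have hmono := intervalIntegral.integral_mono_on hpih.le hintF
      ((intervalIntegrable_const) : IntervalIntegrable (fun _ => (1 + r ^ 2) / r)
        MeasureTheory.volume 0 (π / 2)) hup
    rw [hconst] at hmono
    have hfin : (π / 2) * ((1 + r ^ 2) / r) < 2 * π / Real.sqrt 3 := by
      have hkey : Real.sqrt 3 * (1 + r ^ 2) < 4 * r := by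
        have h1 : 0 < Real.sqrt 3 - r := by linarith
        have h2 : 0 < Real.sqrt 3 * r - 1 := by nlinarith
        nlinarith [mul_pos h1 h2]
      have heq : (π / 2) * ((1 + r ^ 2) / r) = π * (1 + r ^ 2) / (2 * r) := by ring
      rw [heq, div_lt_div_iff₀ (by positivity) hs3]
      nlinarith [mul_lt_mul_of_pos_left hkey Real.pi_pos]
    rw [hA]
    linarith
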